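/- Let G ≤ Sym({1,…,n}) act on ℝ^n by coordinate permutation, let Λ ⊆ ℝ^n be a G-lattice, and let H ≤ G be a subgroup. Then {u ∈ ℝ^n : ⟨u,v⟩ ∈ ℤ for all v ∈ Λ_0θ_H} = ker θ_H ⊕ (Λ_0)^*θ_H; that is, this set equals ker θ_H + {wθ_H : w ∈ (Λ_0)^*} and ker θ_H ∩ {wθ_H : w ∈ (Λ_0)^*} = {0}. -/

import Mathlib

open scoped BigOperators

/-- Coordinate-permutation action: `(v · g) i = v (g⁻¹ i)`. -/
def pAct {α : Type} {n : ℕ} (g : Equiv.Perm (Fin n)) (v : Fin n → α) : Fin n → α :=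
  fun i => v (g⁻¹ i)

/-- Hayden's operator on `ℝ^n`: `v θ_H = |H|⁻¹ ∑_{h ∈ H} v h`. -/
noncomputable def thetaR {n : ℕ} (H : Subgroup (Equiv.Perm (Fin n)))
    (v : Fin n → ℝ) : Fin n → ℝ :=
  fun i => (Nat.card H : ℝ)⁻¹ * ∑ᶠ h ∈ (H : Set (Equiv.Perm (Fin n))), v (h⁻¹ i)

/-- The dual of a subset `S ⊆ ℝ^n`:
`S^* = {u : ⟨u,v⟩ ∈ ℤ for all v ∈ S}`. -/
def dualL {n : ℕ} (S : Set (Fin n → ℝ)) : Set (Fin n → ℝ) :=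
  {u | ∀ v ∈ S, ∃ m : ℤ, ∑ i, u i * v i = (m : ℝ)}

section helpers
variable {n : ℕ} (H : Subgroup (Equiv.Perm (Fin n)))

noncomputable def Hs : Finset (Equiv.Perm (Fin n)) :=
  ((H : Set (Equiv.Perm (Fin n))).toFinite).toFinset

lemma thetaR_apply' (v : Fin n → ℝ) (i : Fin n) :
    thetaR H v i = ((Hs H).card : ℝ)⁻¹ * ∑ h ∈ Hs H, v (h⁻¹ i) := by
  have h1 : (H : Set (Equiv.Perm (Fin n))) = ↑(Hs H) := (Set.Finite.coe_toFinset _).symm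
  have h2 : Nat.card H = (Hs H).card := by
    have : Nat.card H = Nat.card (H : Set (Equiv.Perm (Fin n))) := rfl
    rw [this, Nat.card_coe_set_eq, Set.ncard_eq_toFinset_card _ (Set.toFinite _)]
    rfl
  rw [thetaR, h2, h1, finsum_mem_coe_finset]

lemma mem_Hs {g : Equiv.Perm (Fin n)} : g ∈ Hs H ↔ g ∈ H := Set.Finite.mem_toFinset _

lemma Hs_card_pos : 0 < (Hs H).card :=
  Finset.card_pos.2 ⟨1, (mem_Hs H).2 H.one_mem⟩

lemma Hs_card_ne : ((Hs H).card : ℝ) ≠ 0 :=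
  Nat.cast_ne_zero.2 (Hs_card_pos H).ne'

lemma theta_zero : thetaR H (0 : Fin n → ℝ) = 0 := by
  funext i; simp [thetaR_apply']

lemma theta_sub (u w : Fin n → ℝ) :
    thetaR H (u - w) = thetaR H u - thetaR H w := by
  funext i
  simp only [thetaR_apply', Pi.sub_apply, Finset.sum_sub_distrib, mul_sub]

lemma theta_idem (v : Fin n → ℝ) :
    thetaR H (thetaR H v) = thetaR H v := by
  funext i
  simp only [thetaR_apply']
  have key : ∀ h ∈ Hs H, ∑ k ∈ Hs H, v (k⁻¹ (h⁻¹ i)) = ∑ k ∈ Hs H, v (k⁻¹ i) := by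
    intro h hh
    refine Finset.sum_equiv (Equiv.mulLeft h) (fun k => ?_) (fun k hk => ?_)
    · simp only [Equiv.coe_mulLeft, mem_Hs]
      exact ⟨fun hk => H.mul_mem ((mem_Hs H).1 hh) hk,
        fun hk => by simpa using H.mul_mem (H.inv_mem ((mem_Hs H).1 hh)) hk⟩
    · simp [mul_inv_rev, Equiv.Perm.mul_apply]
  have e2 : ∑ x ∈ Hs H,
      (((Hs H).card : ℝ)⁻¹ * ∑ h ∈ Hs H, v (h⁻¹ (x⁻¹ i)))
      = (Hs H).card • (((Hs H).card : ℝ)⁻¹ * ∑ k ∈ Hs H, v (k⁻¹ i)) := by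
    rw [← Finset.sum_const]
    exact Finset.sum_congr rfl fun x hx => by rw [key x hx]
  rw [e2, nsmul_eq_mul]
  have hc := Hs_card_ne H
  field_simp

lemma expand_left (u v : Fin n → ℝ) :
    ∑ i, thetaR H u i * v i
      = ((Hs H).card : ℝ)⁻¹ * ∑ h ∈ Hs H, ∑ i, u (h⁻¹ i) * v i := by
  have e1 : ∀ i, thetaR H u i * v i
      = ∑ h ∈ Hs H, ((Hs H).card : ℝ)⁻¹ * (u (h⁻¹ i) * v i) := by
    intro i
    rw [thetaR_apply', mul_assoc, Finset.sum_mul, Finset.mul_sum]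
  calc ∑ i, thetaR H u i * v i
      = ∑ i, ∑ h ∈ Hs H, ((Hs H).card : ℝ)⁻¹ * (u (h⁻¹ i) * v i) :=
        Finset.sum_congr rfl fun i _ => e1 i
    _ = ∑ h ∈ Hs H, ∑ i, ((Hs H).card : ℝ)⁻¹ * (u (h⁻¹ i) * v i) := Finset.sum_comm
    _ = ((Hs H).card : ℝ)⁻¹ * ∑ h ∈ Hs H, ∑ i, u (h⁻¹ i) * v i := by
        rw [Finset.mul_sum]
        exact Finset.sum_congr rfl fun h _ => (Finset.mul_sum _ _ _).symm

lemma expand_right (u v : Fin n → ℝ) :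
    ∑ i, u i * thetaR H v i
      = ((Hs H).card : ℝ)⁻¹ * ∑ h ∈ Hs H, ∑ i, u i * v (h⁻¹ i) := by
  have e1 : ∀ i, u i * thetaR H v i
      = ∑ h ∈ Hs H, ((Hs H).card : ℝ)⁻¹ * (u i * v (h⁻¹ i)) := by
    intro i
    rw [thetaR_apply', Finset.mul_sum, Finset.mul_sum]
    exact Finset.sum_congr rfl fun h _ => by ring
  calc ∑ i, u i * thetaR H v i
      = ∑ i, ∑ h ∈ Hs H, ((Hs H).card : ℝ)⁻¹ * (u i * v (h⁻¹ i)) :=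
        Finset.sum_congr rfl fun i _ => e1 i
    _ = ∑ h ∈ Hs H, ∑ i, ((Hs H).card : ℝ)⁻¹ * (u i * v (h⁻¹ i)) := Finset.sum_comm
    _ = ((Hs H).card : ℝ)⁻¹ * ∑ h ∈ Hs H, ∑ i, u i * v (h⁻¹ i) := by
        rw [Finset.mul_sum]
        exact Finset.sum_congr rfl fun h _ => (Finset.mul_sum _ _ _).symm

lemma theta_selfadj (u v : Fin n → ℝ) :
    ∑ i, thetaR H u i * v i = ∑ i, u i * thetaR H v i := by
  rw [expand_left, expand_right]
  congr 1
  calc ∑ h ∈ Hs H, ∑ i, u (h⁻¹ i) * v i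
      = ∑ h ∈ Hs H, ∑ i, u i * v (h i) := by
        refine Finset.sum_congr rfl fun h _ => ?_
        rw [← Equiv.sum_comp h (fun i => u (h⁻¹ i) * v i)]
        simp
    _ = ∑ h ∈ Hs H, ∑ i, u i * v (h⁻¹ i) := by
        refine Finset.sum_equiv (Equiv.inv _) (fun k => ?_) (fun k hk => ?_)
        · simp only [Equiv.inv_apply, mem_Hs]
          exact ⟨H.inv_mem, fun hk => by simpa using H.inv_mem hk⟩
        · simp

end helpers

/-- Lattice version of Hayden's theorem:
`(Λ₀θ_H)^* = ker θ_H ⊕ (Λ₀)^* θ_H`. -/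
theorem stmt9 {n : ℕ}
    (G H : Subgroup (Equiv.Perm (Fin n))) (hHG : H ≤ G)
    (L : Submodule ℤ (Fin n → ℝ))
    (hlat : ∃ b : Module.Basis (Fin n) ℝ (Fin n → ℝ), L = Submodule.span ℤ (Set.range b))
    (hG : ∀ v ∈ L, ∀ g ∈ G, pAct g v ∈ L) :
    dualL (thetaR H '' {v ∈ (L : Set (Fin n → ℝ)) | thetaR H v ∈ L})
        = {w | ∃ a ∈ {v : Fin n → ℝ | thetaR H v = 0},
               ∃ b ∈ thetaR H '' dualL {v ∈ (L : Set (Fin n → ℝ)) | thetaR H v ∈ L},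
                 w = a + b}
      ∧ {v : Fin n → ℝ | thetaR H v = 0}
          ∩ (thetaR H '' dualL {v ∈ (L : Set (Fin n → ℝ)) | thetaR H v ∈ L}) = {0} := by
  set Λ₀ : Set (Fin n → ℝ) := {v ∈ (L : Set (Fin n → ℝ)) | thetaR H v ∈ L} with hΛ₀
  constructor
  · ext u
    constructor
    · intro hu
      refine ⟨u - thetaR H u, ?_, thetaR H (thetaR H u), ⟨thetaR H u, ?_, rfl⟩, ?_⟩
      · show thetaR H (u - thetaR H u) = 0
        rw [theta_sub, theta_idem, sub_self]
      · -- thetaR H u ∈ dualL Λ₀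
        intro v hv
        obtain ⟨m, hm⟩ := hu (thetaR H v) ⟨v, hv, rfl⟩
        exact ⟨m, by rw [theta_selfadj]; exact hm⟩
      · rw [theta_idem]; abel
    · rintro ⟨a, ha, b, ⟨w, hw, rfl⟩, rfl⟩
      rintro v ⟨v₀, hv₀, rfl⟩
      have hv₀' : thetaR H v₀ ∈ Λ₀ := ⟨hv₀.2, by rw [theta_idem]; exact hv₀.2⟩
      obtain ⟨m, hm⟩ := hw (thetaR H v₀) hv₀'
      refine ⟨m, ?_⟩
      have h1 : ∑ i, a i * thetaR H v₀ i = 0 := by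
        rw [← theta_selfadj]
        simp only [Set.mem_setOf_eq] at ha
        rw [ha]
        simp
      have h2 : ∑ i, thetaR H w i * thetaR H v₀ i = (m : ℝ) := by
        rw [theta_selfadj, theta_idem]
        exact hm
      calc ∑ i, (a + thetaR H w) i * thetaR H v₀ i
          = ∑ i, (a i * thetaR H v₀ i + thetaR H w i * thetaR H v₀ i) := by
            refine Finset.sum_congr rfl fun i _ => ?_
            simp [add_mul]
        _ = (m : ℝ) := by rw [Finset.sum_add_distrib, h1, h2, zero_add]
  · ext v
    simp only [Set.mem_inter_iff, Set.mem_setOf_eq, Set.mem_singleton_iff]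
    constructor
    · rintro ⟨hv0, w, hw, rfl⟩
      rw [← theta_idem H w]
      exact hv0
    · rintro rfl
      refine ⟨theta_zero H, 0, fun v _ => ⟨0, by simp⟩, theta_zero H⟩
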